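/- Let W be a pointy potential on ℝ^d with constants λ ∈ ℝ and w_∞ ≥ 0, let ρ^{ini} be a probability measure on ℝ^d with finite second moment, and assume the strict 1/2-CFL condition w_∞ Σ_{i=1}^d Δt/Δx_i < 1/2. Let ρ_J^0 := ρ^{ini}(C_J) and let (ρ_J^n) be produced by the upwind scheme. Then the center of mass is conserved: for all n ∈ ℕ, Σ_{J∈ℤ^d} x_J ρ_J^n = Σ_{J∈ℤ^d} x_J ρ_J^0 (all these sums converging absolutely). -/

import Mathlib

open MeasureTheory Real Set
open scoped RealInnerProductSpace ENNReal

noncomputable section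

/-- `ℝ^d` with the Euclidean structure. -/
abbrev Euc (d : ℕ) := EuclideanSpace ℝ (Fin d)

open Classical in
/-- `∇̂W`: the gradient of `W` away from `0`, and `0` at `0`. -/
def hatGrad {d : ℕ} (W : Euc d → ℝ) (x : Euc d) : Euc d :=
  if x = 0 then 0 else gradient W x

/-- Positive part `r⁺ = max(r,0)`. -/
def pos (r : ℝ) : ℝ := max r 0

/-- Negative part `r⁻ = max(-r,0)`. -/
def neg (r : ℝ) : ℝ := max (-r) 0

/-- The node `x_J = (J_1 Δx_1, …, J_d Δx_d)`. -/
def node {d : ℕ} (Δx : Fin d → ℝ) (J : Fin d → ℤ) : Euc d :=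
  (EuclideanSpace.equiv (Fin d) ℝ).symm (fun i => (J i : ℝ) * Δx i)

/-- The cell `C_J = Π_i [(J_i - 1/2)Δx_i, (J_i + 1/2)Δx_i)`. -/
def cell {d : ℕ} (Δx : Fin d → ℝ) (J : Fin d → ℤ) : Set (Euc d) :=
  {y | ∀ i, ((J i : ℝ) - 1/2) * Δx i ≤ y i ∧ y i < ((J i : ℝ) + 1/2) * Δx i}

/-- The discrete velocities `(a_i)_J = -Σ_K ρ_K (∇̂W)_i (x_J - x_K)`. -/
def discVel {d : ℕ} (W : Euc d → ℝ) (Δx : Fin d → ℝ) (ρ : (Fin d → ℤ) → ℝ)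
    (J : Fin d → ℤ) (i : Fin d) : ℝ :=
  -∑' K : Fin d → ℤ, ρ K * hatGrad W (node Δx J - node Δx K) i

/-- One step of the upwind scheme. -/
def upwindStep {d : ℕ} (Δx : Fin d → ℝ) (Δt : ℝ) (a : (Fin d → ℤ) → Fin d → ℝ)
    (ρ : (Fin d → ℤ) → ℝ) (J : Fin d → ℤ) : ℝ :=
  ρ J - ∑ i : Fin d, (Δt / Δx i) *
    (pos (a J i) * ρ J - neg (a (J + Pi.single i 1) i) * ρ (J + Pi.single i 1)
      - pos (a (J - Pi.single i 1) i) * ρ (J - Pi.single i 1) + neg (a J i) * ρ J)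

/-- auxiliary lemmas -/
-- basic pos/neg lemmas
lemma pos_sub_neg (r : ℝ) : pos r - neg r = r := by
  rcases le_total r 0 with h | h <;> simp [pos, neg, max_eq_left, max_eq_right, h] <;> linarith

lemma pos_add_neg (r : ℝ) : pos r + neg r = |r| := by
  rcases le_total r 0 with h | h <;>
    simp [pos, neg, abs_of_nonpos, abs_of_nonneg, h] <;> linarith

lemma pos_nonneg (r : ℝ) : 0 ≤ pos r := le_max_right _ _
lemma neg_nonneg' (r : ℝ) : 0 ≤ neg r := le_max_right _ _
lemma pos_le_abs (r : ℝ) : pos r ≤ |r| := by rcases le_total r 0 with h | h <;> simp [pos, abs_of_nonpos, abs_of_nonneg, h]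
lemma neg_le_abs' (r : ℝ) : neg r ≤ |r| := by rcases le_total r 0 with h | h <;> simp [neg, abs_of_nonpos, abs_of_nonneg, h] <;> linarith

-- coordinate bound
lemma Euc.abs_apply_le_norm {d : ℕ} (x : Euc d) (i : Fin d) : |x i| ≤ ‖x‖ := by
  rw [EuclideanSpace.norm_eq]
  rw [show |x i| = Real.sqrt (|x i| ^ 2) by rw [Real.sqrt_sq (abs_nonneg _)]]
  apply Real.sqrt_le_sqrt
  rw [sq_abs]
  calc x i ^ 2 = ‖x i‖ ^ 2 := by rw [Real.norm_eq_abs, sq_abs]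
    _ ≤ ∑ j, ‖x j‖ ^ 2 :=
      Finset.single_le_sum (f := fun j => ‖x j‖ ^ 2) (fun j _ => by positivity) (Finset.mem_univ i)

-- norm bound by l1 bound
lemma Euc.norm_le_sum {d : ℕ} (v : Euc d) (c : Fin d → ℝ) (hc : ∀ i, 0 ≤ c i)
    (h : ∀ i, |v i| ≤ c i) : ‖v‖ ≤ ∑ i, c i := by
  rw [EuclideanSpace.norm_eq]
  rw [show ∑ i, c i = Real.sqrt ((∑ i, c i) ^ 2) by
    rw [Real.sqrt_sq (Finset.sum_nonneg fun i _ => hc i)]]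
  apply Real.sqrt_le_sqrt
  calc ∑ j, ‖v j‖ ^ 2 ≤ ∑ j, c j ^ 2 := by
        apply Finset.sum_le_sum
        intro j _
        have := h j
        rw [Real.norm_eq_abs]
        nlinarith [abs_nonneg (v j), hc j]
    _ ≤ (∑ j, c j) ^ 2 := Finset.sum_sq_le_sq_sum_of_nonneg (fun j _ => hc j)

-- gradient odd
lemma gradient_neg_of_even {d : ℕ} {W : Euc d → ℝ} (hsymm : ∀ x, W (-x) = W x) (x : Euc d) :
    gradient W (-x) = -gradient W x := by
  have hWc : (fun y : Euc d => W (-y)) = W := funext hsymm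
  have hdiff : ∀ y : Euc d, DifferentiableAt ℝ W (-y) → DifferentiableAt ℝ W y := by
    intro y hy
    have hneg : DifferentiableAt ℝ (fun z : Euc d => -z) y := differentiableAt_id.neg
    have := hy.comp y hneg
    rwa [show (W ∘ fun z : Euc d => -z) = W from funext hsymm] at this
  by_cases h : DifferentiableAt ℝ W (-x)
  · have hx : DifferentiableAt ℝ W x := hdiff x h
    have hneg : DifferentiableAt ℝ (fun z : Euc d => -z) x := differentiableAt_id.neg
    have hcomp : fderiv ℝ (W ∘ fun z : Euc d => -z) x
        = (fderiv ℝ W (-x)).comp (fderiv ℝ (fun z : Euc d => -z) x) := fderiv_comp x h hneg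
    have hfneg : fderiv ℝ (fun z : Euc d => -z) x = -(ContinuousLinearMap.id ℝ (Euc d)) := by
      have : (fun z : Euc d => -z) = fun z : Euc d => -(id z) := rfl
      rw [this, fderiv_fun_neg, fderiv_id]
    have key : fderiv ℝ W x = -(fderiv ℝ W (-x)) := by
      have : (W ∘ fun z : Euc d => -z) = W := funext hsymm
      rw [this] at hcomp
      rw [hcomp, hfneg, ContinuousLinearMap.comp_neg, ContinuousLinearMap.comp_id]
    unfold gradient
    rw [key, map_neg, neg_neg]
  · have h2 : ¬ DifferentiableAt ℝ W x := fun hx => h (by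
      have := hdiff (-x) (by rwa [neg_neg])
      exact this)
    rw [gradient_eq_zero_of_not_differentiableAt h, gradient_eq_zero_of_not_differentiableAt h2,
      neg_zero]

lemma hatGrad_neg {d : ℕ} {W : Euc d → ℝ} (hsymm : ∀ x, W (-x) = W x) (x : Euc d) :
    hatGrad W (-x) = -hatGrad W x := by
  classical
  unfold hatGrad
  by_cases hx : x = 0
  · simp [hx]
  · rw [if_neg (by simpa using hx), if_neg hx]
    exact gradient_neg_of_even hsymm x

lemma hatGrad_norm_le {d : ℕ} {W : Euc d → ℝ} {winf : ℝ} (hwinf : 0 ≤ winf)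
    (hbound : ∀ x : Euc d, x ≠ 0 → ‖gradient W x‖ ≤ winf) (x : Euc d) :
    ‖hatGrad W x‖ ≤ winf := by
  classical
  unfold hatGrad
  by_cases hx : x = 0
  · simpa [hx] using hwinf
  · rw [if_neg hx]; exact hbound x hx

lemma node_apply {d : ℕ} (Δx : Fin d → ℝ) (J : Fin d → ℤ) (i : Fin d) :
    node Δx J i = (J i : ℝ) * Δx i := rfl

lemma node_add_single {d : ℕ} (Δx : Fin d → ℝ) (J : Fin d → ℤ) (i : Fin d) :
    node Δx (J + Pi.single i 1) = node Δx J + EuclideanSpace.single i (Δx i) := by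
  apply PiLp.ext
  intro k
  rw [PiLp.add_apply, node_apply, node_apply, Pi.add_apply, EuclideanSpace.single_apply]
  push_cast
  rcases eq_or_ne k i with h | h
  · subst h; simp [Pi.single_apply]; ring
  · simp [Pi.single_apply, h]

lemma node_sub_single {d : ℕ} (Δx : Fin d → ℝ) (J : Fin d → ℤ) (i : Fin d) :
    node Δx (J - Pi.single i 1) = node Δx J - EuclideanSpace.single i (Δx i) := by
  have := node_add_single Δx (J - Pi.single i 1) i
  rw [sub_add_cancel] at this
  rw [this]; abel

section Scheme

variable {d : ℕ} {W : Euc d → ℝ} {winf : ℝ} {Δx : Fin d → ℝ} {Δt : ℝ}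
  {a : (Fin d → ℤ) → Fin d → ℝ} {ρ : (Fin d → ℤ) → ℝ}

/-- shift summability -/
lemma summable_shift {E : Type*} [AddCommGroup E] [TopologicalSpace E]
    (f : (Fin d → ℤ) → E) (hf : Summable f) (v : Fin d → ℤ) :
    Summable (fun J => f (J + v)) :=
  (Equiv.addRight v).summable_iff.mpr hf

lemma tsum_shift {E : Type*} [AddCommMonoid E] [TopologicalSpace E] [T2Space E]
    (f : (Fin d → ℤ) → E) (v : Fin d → ℤ) :
    ∑' J, f (J + v) = ∑' J, f J :=
  (Equiv.addRight v).tsum_eq f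

lemma norm_node_le_add (hΔx : ∀ i, 0 < Δx i) (J : Fin d → ℤ) (i : Fin d) :
    ‖node Δx J‖ ≤ ‖node Δx (J + Pi.single i 1)‖ + Δx i := by
  have h : node Δx J = node Δx (J + Pi.single i 1) - EuclideanSpace.single i (Δx i) := by
    rw [node_add_single]; abel
  calc ‖node Δx J‖ ≤ ‖node Δx (J + Pi.single i 1)‖ + ‖EuclideanSpace.single i (Δx i)‖ := by
        rw [h]; exact norm_sub_le _ _
    _ = ‖node Δx (J + Pi.single i 1)‖ + Δx i := by
        rw [EuclideanSpace.norm_single, Real.norm_eq_abs, abs_of_pos (hΔx i)]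

lemma norm_node_le_sub (hΔx : ∀ i, 0 < Δx i) (J : Fin d → ℤ) (i : Fin d) :
    ‖node Δx J‖ ≤ ‖node Δx (J - Pi.single i 1)‖ + Δx i := by
  have h : node Δx J = node Δx (J - Pi.single i 1) + EuclideanSpace.single i (Δx i) := by
    rw [node_sub_single]; abel
  calc ‖node Δx J‖ ≤ ‖node Δx (J - Pi.single i 1)‖ + ‖EuclideanSpace.single i (Δx i)‖ := by
        rw [h]; exact norm_add_le _ _
    _ = ‖node Δx (J - Pi.single i 1)‖ + Δx i := by
        rw [EuclideanSpace.norm_single, Real.norm_eq_abs, abs_of_pos (hΔx i)]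

lemma discVel_inner_summable (hwinf : 0 ≤ winf)
    (hgb : ∀ x : Euc d, ‖hatGrad W x‖ ≤ winf)
    (hρ0 : ∀ J, 0 ≤ ρ J) (hρs : Summable ρ) (J : Fin d → ℤ) (i : Fin d) :
    Summable (fun K => ρ K * hatGrad W (node Δx J - node Δx K) i) := by
  apply Summable.of_norm_bounded (g := fun K => ρ K * winf) (hρs.mul_right winf)
  intro K
  rw [Real.norm_eq_abs, abs_mul, abs_of_nonneg (hρ0 K)]
  exact mul_le_mul_of_nonneg_left
    ((Euc.abs_apply_le_norm _ i).trans (hgb _)) (hρ0 K)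

lemma abs_tsum_le' {ι : Type*} {f : ι → ℝ} (hf : Summable (fun i => |f i|)) :
    |∑' i, f i| ≤ ∑' i, |f i| := by
  have h2 : Summable (fun i => ‖f i‖) := by simpa only [Real.norm_eq_abs] using hf
  have := norm_tsum_le_tsum_norm h2
  simpa only [Real.norm_eq_abs] using this

lemma discVel_abs_le (hwinf : 0 ≤ winf)
    (hgb : ∀ x : Euc d, ‖hatGrad W x‖ ≤ winf)
    (hρ0 : ∀ J, 0 ≤ ρ J) (hρs : Summable ρ) (hρ1 : ∑' J, ρ J ≤ 1)
    (J : Fin d → ℤ) (i : Fin d) : |discVel W Δx ρ J i| ≤ winf := by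
  have hs := discVel_inner_summable (Δx := Δx) hwinf hgb hρ0 hρs J i
  rw [discVel, abs_neg]
  calc |∑' K, ρ K * hatGrad W (node Δx J - node Δx K) i|
      ≤ ∑' K, |ρ K * hatGrad W (node Δx J - node Δx K) i| := abs_tsum_le' hs.abs
    _ ≤ ∑' K, ρ K * winf := by
        apply Summable.tsum_le_tsum _ hs.abs (hρs.mul_right winf)
        intro K
        rw [abs_mul, abs_of_nonneg (hρ0 K)]
        exact mul_le_mul_of_nonneg_left
          ((Euc.abs_apply_le_norm _ i).trans (hgb _)) (hρ0 K)
    _ = (∑' K, ρ K) * winf := tsum_mul_right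
    _ ≤ 1 * winf := mul_le_mul_of_nonneg_right hρ1 hwinf
    _ = winf := one_mul _

lemma upwind_expand (J : Fin d → ℤ) :
    upwindStep Δx Δt a ρ J
      = ρ J * (1 - ∑ i, Δt / Δx i * (pos (a J i) + neg (a J i)))
        + ∑ i, Δt / Δx i *
          (neg (a (J + Pi.single i 1) i) * ρ (J + Pi.single i 1)
            + pos (a (J - Pi.single i 1) i) * ρ (J - Pi.single i 1)) := by
  unfold upwindStep
  have hterm : ∀ i : Fin d, Δt / Δx i *
      (pos (a J i) * ρ J - neg (a (J + Pi.single i 1) i) * ρ (J + Pi.single i 1)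
        - pos (a (J - Pi.single i 1) i) * ρ (J - Pi.single i 1) + neg (a J i) * ρ J)
      = ρ J * (Δt / Δx i * (pos (a J i) + neg (a J i)))
        - Δt / Δx i * (neg (a (J + Pi.single i 1) i) * ρ (J + Pi.single i 1)
            + pos (a (J - Pi.single i 1) i) * ρ (J - Pi.single i 1)) := fun i => by ring
  rw [Finset.sum_congr rfl fun i _ => hterm i, Finset.sum_sub_distrib, ← Finset.mul_sum]
  ring

lemma summable_shift_sub {E : Type*} [AddCommGroup E] [TopologicalSpace E]
    (f : (Fin d → ℤ) → E) (hf : Summable f) (v : Fin d → ℤ) :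
    Summable (fun J => f (J - v)) := by
  simpa only [sub_eq_add_neg] using summable_shift f hf (-v)

lemma tsum_shift_sub {E : Type*} [AddCommGroup E] [TopologicalSpace E] [T2Space E]
    (f : (Fin d → ℤ) → E) (v : Fin d → ℤ) :
    ∑' J, f (J - v) = ∑' J, f J := by
  simpa only [sub_eq_add_neg] using tsum_shift f (-v)

lemma summable_coeff_mul {c : (Fin d → ℤ) → ℝ} (hc0 : ∀ J, 0 ≤ c J) (hc : ∀ J, c J ≤ winf)
    (hρ0 : ∀ J, 0 ≤ ρ J) (hρs : Summable ρ) : Summable (fun J => c J * ρ J) := by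
  apply Summable.of_norm_bounded (g := fun J => winf * ρ J) (hρs.mul_left winf)
  intro J
  rw [Real.norm_eq_abs, abs_mul, abs_of_nonneg (hc0 J), abs_of_nonneg (hρ0 J)]
  exact mul_le_mul_of_nonneg_right (hc J) (hρ0 J)

lemma coeff_bounds (hwinf : 0 ≤ winf) (hΔx : ∀ i, 0 < Δx i) (hΔt : 0 < Δt)
    (hCFL : winf * ∑ i, Δt / Δx i < 1/2)
    (habs : ∀ J i, |a J i| ≤ winf) (J : Fin d → ℤ) :
    0 ≤ ∑ i, Δt / Δx i * (pos (a J i) + neg (a J i)) ∧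
      ∑ i, Δt / Δx i * (pos (a J i) + neg (a J i)) ≤ 1/2 := by
  constructor
  · apply Finset.sum_nonneg
    intro i _
    have := pos_nonneg (a J i); have := neg_nonneg' (a J i)
    have := (hΔx i); have := hΔt
    positivity
  · have step1 : ∑ i, Δt / Δx i * (pos (a J i) + neg (a J i)) ≤ ∑ i, Δt / Δx i * winf := by
      apply Finset.sum_le_sum
      intro i _
      apply mul_le_mul_of_nonneg_left _ (le_of_lt (div_pos hΔt (hΔx i)))
      rw [pos_add_neg]
      exact habs J i
    have step2 : ∑ i, Δt / Δx i * winf = winf * ∑ i, Δt / Δx i := by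
      rw [← Finset.sum_mul, mul_comm]
    linarith

lemma upwind_nonneg (hwinf : 0 ≤ winf) (hΔx : ∀ i, 0 < Δx i) (hΔt : 0 < Δt)
    (hCFL : winf * ∑ i, Δt / Δx i < 1/2)
    (habs : ∀ J i, |a J i| ≤ winf) (hρ0 : ∀ J, 0 ≤ ρ J) (J : Fin d → ℤ) :
    0 ≤ upwindStep Δx Δt a ρ J := by
  rw [upwind_expand]
  obtain ⟨h1, h2⟩ := coeff_bounds hwinf hΔx hΔt hCFL habs J
  have ha : 0 ≤ ρ J * (1 - ∑ i, Δt / Δx i * (pos (a J i) + neg (a J i))) :=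
    mul_nonneg (hρ0 J) (by linarith)
  have hb : 0 ≤ ∑ i : Fin d, Δt / Δx i *
      (neg (a (J + Pi.single i 1) i) * ρ (J + Pi.single i 1)
        + pos (a (J - Pi.single i 1) i) * ρ (J - Pi.single i 1)) := by
    apply Finset.sum_nonneg
    intro i _
    have n1 := neg_nonneg' (a (J + Pi.single i 1) i)
    have n2 := pos_nonneg (a (J - Pi.single i 1) i)
    have r1 := hρ0 (J + Pi.single i 1)
    have r2 := hρ0 (J - Pi.single i 1)
    have := hΔx i; have := hΔt
    positivity
  linarith

lemma summable_posmul (hwinf : 0 ≤ winf) (habs : ∀ J i, |a J i| ≤ winf)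
    (hρ0 : ∀ J, 0 ≤ ρ J) (hρs : Summable ρ) (i : Fin d) :
    Summable (fun J => pos (a J i) * ρ J) :=
  summable_coeff_mul (fun J => pos_nonneg _) (fun J => (pos_le_abs _).trans (habs J i)) hρ0 hρs

lemma summable_negmul (hwinf : 0 ≤ winf) (habs : ∀ J i, |a J i| ≤ winf)
    (hρ0 : ∀ J, 0 ≤ ρ J) (hρs : Summable ρ) (i : Fin d) :
    Summable (fun J => neg (a J i) * ρ J) :=
  summable_coeff_mul (fun J => neg_nonneg' _) (fun J => (neg_le_abs' _).trans (habs J i)) hρ0 hρs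

lemma flux_summable (hwinf : 0 ≤ winf) (habs : ∀ J i, |a J i| ≤ winf)
    (hρ0 : ∀ J, 0 ≤ ρ J) (hρs : Summable ρ) (i : Fin d) :
    Summable (fun J => Δt / Δx i *
      (pos (a J i) * ρ J - neg (a (J + Pi.single i 1) i) * ρ (J + Pi.single i 1)
        - pos (a (J - Pi.single i 1) i) * ρ (J - Pi.single i 1) + neg (a J i) * ρ J)) := by
  have h1 := summable_posmul hwinf habs hρ0 hρs i
  have h4 := summable_negmul hwinf habs hρ0 hρs i
  have h2 := summable_shift (fun J => neg (a J i) * ρ J) h4 (Pi.single i 1)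
  have h3 := summable_shift_sub (fun J => pos (a J i) * ρ J) h1 (Pi.single i 1)
  exact (((h1.sub h2).sub h3).add h4).mul_left _

lemma upwind_summable (hwinf : 0 ≤ winf) (habs : ∀ J i, |a J i| ≤ winf)
    (hρ0 : ∀ J, 0 ≤ ρ J) (hρs : Summable ρ) :
    Summable (upwindStep Δx Δt a ρ) :=
  hρs.sub (summable_sum (fun i _ => flux_summable hwinf habs hρ0 hρs i))

lemma flux_tsum_zero (hwinf : 0 ≤ winf) (habs : ∀ J i, |a J i| ≤ winf)
    (hρ0 : ∀ J, 0 ≤ ρ J) (hρs : Summable ρ) (i : Fin d) :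
    ∑' J, Δt / Δx i *
      (pos (a J i) * ρ J - neg (a (J + Pi.single i 1) i) * ρ (J + Pi.single i 1)
        - pos (a (J - Pi.single i 1) i) * ρ (J - Pi.single i 1) + neg (a J i) * ρ J) = 0 := by
  have h1 := summable_posmul hwinf habs hρ0 hρs i
  have h4 := summable_negmul hwinf habs hρ0 hρs i
  have h2 := summable_shift (fun J => neg (a J i) * ρ J) h4 (Pi.single i 1)
  have h3 := summable_shift_sub (fun J => pos (a J i) * ρ J) h1 (Pi.single i 1)
  rw [tsum_mul_left, Summable.tsum_add ((h1.sub h2).sub h3) h4, Summable.tsum_sub (h1.sub h2) h3,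
    Summable.tsum_sub h1 h2, tsum_shift (fun J => neg (a J i) * ρ J) (Pi.single i 1),
    tsum_shift_sub (fun J => pos (a J i) * ρ J) (Pi.single i 1)]
  ring

lemma upwind_mass (hwinf : 0 ≤ winf) (habs : ∀ J i, |a J i| ≤ winf)
    (hρ0 : ∀ J, 0 ≤ ρ J) (hρs : Summable ρ) :
    ∑' J, upwindStep Δx Δt a ρ J = ∑' J, ρ J := by
  unfold upwindStep
  rw [Summable.tsum_sub hρs (summable_sum (fun i _ => flux_summable hwinf habs hρ0 hρs i)),
    Summable.tsum_finsetSum (fun i _ => flux_summable hwinf habs hρ0 hρs i)]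
  simp only [flux_tsum_zero hwinf habs hρ0 hρs]
  simp

lemma moment_shift_summable (hΔx : ∀ i, 0 < Δx i) (hρs : Summable ρ)
    (hmom : Summable (fun J => ρ J * ‖node Δx J‖)) (i : Fin d) :
    Summable (fun K => ρ K * (‖node Δx K‖ + Δx i)) := by
  have : (fun K => ρ K * (‖node Δx K‖ + Δx i))
      = fun K => ρ K * ‖node Δx K‖ + ρ K * Δx i := by
    funext K; ring
  rw [this]
  exact hmom.add (hρs.mul_right _)

lemma upwind_le (hwinf : 0 ≤ winf) (hΔx : ∀ i, 0 < Δx i) (hΔt : 0 < Δt)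
    (hCFL : winf * ∑ i, Δt / Δx i < 1/2)
    (habs : ∀ J i, |a J i| ≤ winf) (hρ0 : ∀ J, 0 ≤ ρ J) (J : Fin d → ℤ) :
    upwindStep Δx Δt a ρ J ≤ ρ J + ∑ i, Δt / Δx i * winf *
      (ρ (J + Pi.single i 1) + ρ (J - Pi.single i 1)) := by
  rw [upwind_expand]
  obtain ⟨h1, h2⟩ := coeff_bounds hwinf hΔx hΔt hCFL habs J
  have ha : ρ J * (1 - ∑ i, Δt / Δx i * (pos (a J i) + neg (a J i))) ≤ ρ J := by
    nlinarith [hρ0 J]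
  have hb : ∑ i : Fin d, Δt / Δx i *
      (neg (a (J + Pi.single i 1) i) * ρ (J + Pi.single i 1)
        + pos (a (J - Pi.single i 1) i) * ρ (J - Pi.single i 1))
      ≤ ∑ i, Δt / Δx i * winf * (ρ (J + Pi.single i 1) + ρ (J - Pi.single i 1)) := by
    apply Finset.sum_le_sum
    intro i _
    have hd : 0 ≤ Δt / Δx i := le_of_lt (div_pos hΔt (hΔx i))
    have b1 : neg (a (J + Pi.single i 1) i) * ρ (J + Pi.single i 1)
        ≤ winf * ρ (J + Pi.single i 1) :=
      mul_le_mul_of_nonneg_right ((neg_le_abs' _).trans (habs _ i)) (hρ0 _)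
    have b2 : pos (a (J - Pi.single i 1) i) * ρ (J - Pi.single i 1)
        ≤ winf * ρ (J - Pi.single i 1) :=
      mul_le_mul_of_nonneg_right ((pos_le_abs _).trans (habs _ i)) (hρ0 _)
    calc Δt / Δx i * (neg (a (J + Pi.single i 1) i) * ρ (J + Pi.single i 1)
          + pos (a (J - Pi.single i 1) i) * ρ (J - Pi.single i 1))
        ≤ Δt / Δx i * (winf * ρ (J + Pi.single i 1) + winf * ρ (J - Pi.single i 1)) := by
          apply mul_le_mul_of_nonneg_left _ hd
          linarith
      _ = Δt / Δx i * winf * (ρ (J + Pi.single i 1) + ρ (J - Pi.single i 1)) := by ring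
  linarith

lemma upwind_moment_summable (hwinf : 0 ≤ winf) (hΔx : ∀ i, 0 < Δx i) (hΔt : 0 < Δt)
    (hCFL : winf * ∑ i, Δt / Δx i < 1/2)
    (habs : ∀ J i, |a J i| ≤ winf) (hρ0 : ∀ J, 0 ≤ ρ J) (hρs : Summable ρ)
    (hmom : Summable (fun J => ρ J * ‖node Δx J‖)) :
    Summable (fun J => upwindStep Δx Δt a ρ J * ‖node Δx J‖) := by
  set G : (Fin d → ℤ) → ℝ := fun J => ρ J * ‖node Δx J‖ + ∑ i, Δt / Δx i * winf *
      (ρ (J + Pi.single i 1) * (‖node Δx (J + Pi.single i 1)‖ + Δx i)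
        + ρ (J - Pi.single i 1) * (‖node Δx (J - Pi.single i 1)‖ + Δx i)) with hG
  have hGs : Summable G := by
    apply hmom.add
    apply summable_sum
    intro i _
    have base := moment_shift_summable hΔx hρs hmom i
    have s1 := summable_shift (fun K => ρ K * (‖node Δx K‖ + Δx i)) base (Pi.single i 1)
    have s2 := summable_shift_sub (fun K => ρ K * (‖node Δx K‖ + Δx i)) base (Pi.single i 1)
    exact (s1.add s2).mul_left _
  apply Summable.of_nonneg_of_le _ _ hGs
  · intro J
    exact mul_nonneg (upwind_nonneg hwinf hΔx hΔt hCFL habs hρ0 J) (norm_nonneg _)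
  · intro J
    have hle := upwind_le hwinf hΔx hΔt hCFL habs hρ0 J
    have hnn : (0:ℝ) ≤ ‖node Δx J‖ := norm_nonneg _
    calc upwindStep Δx Δt a ρ J * ‖node Δx J‖
        ≤ (ρ J + ∑ i, Δt / Δx i * winf * (ρ (J + Pi.single i 1) + ρ (J - Pi.single i 1)))
            * ‖node Δx J‖ := mul_le_mul_of_nonneg_right hle hnn
      _ = ρ J * ‖node Δx J‖ + ∑ i, Δt / Δx i * winf *
            (ρ (J + Pi.single i 1) * ‖node Δx J‖ + ρ (J - Pi.single i 1) * ‖node Δx J‖) := by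
          rw [add_mul, Finset.sum_mul]
          congr 1
          apply Finset.sum_congr rfl
          intro i _
          ring
      _ ≤ G J := by
          rw [hG]
          apply add_le_add_right
          apply Finset.sum_le_sum
          intro i _
          have hd : 0 ≤ Δt / Δx i * winf :=
            mul_nonneg (le_of_lt (div_pos hΔt (hΔx i))) hwinf
          apply mul_le_mul_of_nonneg_left _ hd
          have e1 := norm_node_le_add hΔx J i
          have e2 := norm_node_le_sub hΔx J i
          have r1 := hρ0 (J + Pi.single i 1)
          have r2 := hρ0 (J - Pi.single i 1)
          nlinarith

set_option maxHeartbeats 1000000 in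
lemma tsum_discVel_mul_eq_zero (hwinf : 0 ≤ winf)
    (hodd : ∀ x : Euc d, hatGrad W (-x) = -hatGrad W x)
    (hgb : ∀ x : Euc d, ‖hatGrad W x‖ ≤ winf)
    (hρ0 : ∀ J, 0 ≤ ρ J) (hρs : Summable ρ) (i : Fin d) :
    ∑' J, discVel W Δx ρ J i * ρ J = 0 := by
  set φ : ((Fin d → ℤ) × (Fin d → ℤ)) → ℝ :=
    fun p => ρ p.1 * (ρ p.2 * hatGrad W (node Δx p.1 - node Δx p.2) i) with hφdef
  have hb : Summable (fun p : (Fin d → ℤ) × (Fin d → ℤ) => ρ p.1 * (ρ p.2 * winf)) :=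
    Summable.mul_of_nonneg hρs (hρs.mul_right winf) (fun K => hρ0 K)
      (fun K => mul_nonneg (hρ0 K) hwinf)
  have hφ : Summable φ := by
    apply Summable.of_norm_bounded hb
    intro p
    rw [hφdef, Real.norm_eq_abs, abs_mul, abs_mul, abs_of_nonneg (hρ0 _), abs_of_nonneg (hρ0 _)]
    apply mul_le_mul_of_nonneg_left _ (hρ0 _)
    exact mul_le_mul_of_nonneg_left ((Euc.abs_apply_le_norm _ i).trans (hgb _)) (hρ0 _)
  have hfib : ∀ J, Summable (fun K => φ (J, K)) := fun J =>
    (discVel_inner_summable (Δx := Δx) hwinf hgb hρ0 hρs J i).mul_left (ρ J)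
  have hswap : ∑' p, φ p = -∑' p, φ p := by
    conv_lhs => rw [← (Equiv.prodComm (Fin d → ℤ) (Fin d → ℤ)).tsum_eq φ]
    rw [← tsum_neg]
    congr 1
    funext p
    show φ (p.2, p.1) = -φ p
    rw [hφdef]
    have : node Δx p.2 - node Δx p.1 = -(node Δx p.1 - node Δx p.2) := by abel
    show ρ p.2 * (ρ p.1 * hatGrad W (node Δx p.2 - node Δx p.1) i)
      = -(ρ p.1 * (ρ p.2 * hatGrad W (node Δx p.1 - node Δx p.2) i))
    rw [this, hodd]
    rw [PiLp.neg_apply]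
    ring
  have hzero : ∑' p, φ p = 0 := by linarith
  have hexp : ∀ J, discVel W Δx ρ J i * ρ J = -∑' K, φ (J, K) := by
    intro J
    rw [discVel, neg_mul, mul_comm, ← tsum_mul_left]
  calc ∑' J, discVel W Δx ρ J i * ρ J = ∑' J, -∑' K, φ (J, K) := by
        congr 1; funext J; exact hexp J
    _ = -∑' J, ∑' K, φ (J, K) := by rw [tsum_neg]
    _ = -∑' p, φ p := by rw [Summable.tsum_prod' hφ hfib]
    _ = 0 := by rw [hzero, neg_zero]

lemma norm_node_add_le (hΔx : ∀ i, 0 < Δx i) (J : Fin d → ℤ) (i : Fin d) :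
    ‖node Δx (J + Pi.single i 1)‖ ≤ ‖node Δx J‖ + Δx i := by
  have h := norm_node_le_sub (hΔx := hΔx) (J + Pi.single i 1) i
  rwa [show J + Pi.single i 1 - Pi.single i 1 = J by abel] at h

lemma norm_node_sub_le (hΔx : ∀ i, 0 < Δx i) (J : Fin d → ℤ) (i : Fin d) :
    ‖node Δx (J - Pi.single i 1)‖ ≤ ‖node Δx J‖ + Δx i := by
  have h := norm_node_le_add (hΔx := hΔx) (J - Pi.single i 1) i
  rwa [show J - Pi.single i 1 + Pi.single i 1 = J by abel] at h

set_option maxHeartbeats 2000000 in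
lemma upwind_com (hwinf : 0 ≤ winf) (hΔx : ∀ i, 0 < Δx i) (hΔt : 0 < Δt)
    (hCFL : winf * ∑ i, Δt / Δx i < 1/2)
    (hodd : ∀ x : Euc d, hatGrad W (-x) = -hatGrad W x)
    (hgb : ∀ x : Euc d, ‖hatGrad W x‖ ≤ winf)
    (hρ0 : ∀ J, 0 ≤ ρ J) (hρs : Summable ρ) (hρ1 : ∑' J, ρ J ≤ 1)
    (hmom : Summable (fun J => ρ J * ‖node Δx J‖)) :
    ∑' J, upwindStep Δx Δt (discVel W Δx ρ) ρ J • node Δx J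
      = ∑' J, ρ J • node Δx J := by
  set a : (Fin d → ℤ) → Fin d → ℝ := discVel W Δx ρ with ha
  have habs : ∀ J i, |a J i| ≤ winf := fun J i =>
    discVel_abs_le hwinf hgb hρ0 hρs hρ1 J i
  have hsm : ∀ (c : (Fin d → ℤ) → ℝ) (x : (Fin d → ℤ) → Euc d)
      (b : (Fin d → ℤ) → ℝ), Summable b → (∀ J, |c J| * ‖x J‖ ≤ b J) →
      Summable (fun J => c J • x J) := by
    intro c x b hb hle
    apply Summable.of_norm_bounded hb
    intro J
    rw [norm_smul, Real.norm_eq_abs]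
    exact hle J
  have S0 : Summable (fun J => ρ J • node Δx J) := by
    apply hsm _ _ _ hmom
    intro J
    rw [abs_of_nonneg (hρ0 J)]
  have hper : ∀ i : Fin d,
      Summable (fun J => (Δt / Δx i *
        (pos (a J i) * ρ J - neg (a (J + Pi.single i 1) i) * ρ (J + Pi.single i 1)
          - pos (a (J - Pi.single i 1) i) * ρ (J - Pi.single i 1) + neg (a J i) * ρ J))
          • node Δx J) ∧
      ∑' J, (Δt / Δx i *
        (pos (a J i) * ρ J - neg (a (J + Pi.single i 1) i) * ρ (J + Pi.single i 1)
          - pos (a (J - Pi.single i 1) i) * ρ (J - Pi.single i 1) + neg (a J i) * ρ J))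
          • node Δx J = 0 := by
    intro i
    set e : Fin d → ℤ := Pi.single i 1 with he
    set E : Euc d := EuclideanSpace.single i (Δx i) with hE
    set p : (Fin d → ℤ) → ℝ := fun J => pos (a J i) * ρ J with hp
    set q : (Fin d → ℤ) → ℝ := fun J => neg (a J i) * ρ J with hq
    have hpb : ∀ J, |p J| ≤ winf * ρ J := by
      intro J
      rw [hp, abs_mul, abs_of_nonneg (hρ0 J), abs_of_nonneg (pos_nonneg _)]
      exact mul_le_mul_of_nonneg_right ((pos_le_abs _).trans (habs J i)) (hρ0 J)
    have hqb : ∀ J, |q J| ≤ winf * ρ J := by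
      intro J
      rw [hq, abs_mul, abs_of_nonneg (hρ0 J), abs_of_nonneg (neg_nonneg' _)]
      exact mul_le_mul_of_nonneg_right ((neg_le_abs' _).trans (habs J i)) (hρ0 J)
    have hmom' : Summable (fun J => winf * (ρ J * (‖node Δx J‖ + Δx i))) :=
      (moment_shift_summable hΔx hρs hmom i).mul_left winf
    have hxb : ∀ J : Fin d → ℤ, ‖node Δx J‖ ≤ ‖node Δx J‖ + Δx i :=
      fun J => by linarith [hΔx i]
    have hbd : ∀ (c : (Fin d → ℤ) → ℝ) (J K : Fin d → ℤ), (|c K| ≤ winf * ρ K) →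
        ‖node Δx J‖ ≤ ‖node Δx K‖ + Δx i →
        |c K| * ‖node Δx J‖ ≤ winf * (ρ K * (‖node Δx K‖ + Δx i)) := by
      intro c J K h1 h2
      calc |c K| * ‖node Δx J‖ ≤ (winf * ρ K) * (‖node Δx K‖ + Δx i) :=
            mul_le_mul h1 h2 (norm_nonneg _) (mul_nonneg hwinf (hρ0 K))
        _ = winf * (ρ K * (‖node Δx K‖ + Δx i)) := by ring
    have ST1 : Summable (fun J => p J • node Δx J) :=
      hsm _ _ _ hmom' (fun J => hbd p J J (hpb J) (hxb J))
    have ST4 : Summable (fun J => q J • node Δx J) :=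
      hsm _ _ _ hmom' (fun J => hbd q J J (hqb J) (hxb J))
    have ST2 : Summable (fun J => q (J + e) • node Δx J) := by
      have hb := summable_shift (fun K => winf * (ρ K * (‖node Δx K‖ + Δx i))) hmom' e
      exact hsm _ _ _ hb (fun J => hbd q J (J + e) (hqb _) (norm_node_le_add hΔx J i))
    have ST3 : Summable (fun J => p (J - e) • node Δx J) := by
      have hb := summable_shift_sub (fun K => winf * (ρ K * (‖node Δx K‖ + Δx i))) hmom' e
      exact hsm _ _ _ hb (fun J => hbd p J (J - e) (hpb _) (norm_node_le_sub hΔx J i))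
    have ST2' : Summable (fun J => q J • node Δx (J - e)) :=
      hsm _ _ _ hmom' (fun J => hbd q (J - e) J (hqb J) (norm_node_sub_le hΔx J i))
    have ST3' : Summable (fun J => p J • node Δx (J + e)) :=
      hsm _ _ _ hmom' (fun J => hbd p (J + e) J (hpb J) (norm_node_add_le hΔx J i))
    have hsplit : (fun J => (Δt / Δx i * (p J - q (J + e) - p (J - e) + q J)) • node Δx J)
        = fun J => (Δt / Δx i) • (p J • node Δx J - q (J + e) • node Δx J
            - p (J - e) • node Δx J + q J • node Δx J) := by
      funext J
      rw [mul_smul, add_smul, sub_smul, sub_smul]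
    have hSsum : Summable (fun J => p J • node Δx J - q (J + e) • node Δx J
        - p (J - e) • node Δx J + q J • node Δx J) := ((ST1.sub ST2).sub ST3).add ST4
    constructor
    · rw [hsplit]
      exact hSsum.const_smul _
    rw [hsplit, Summable.tsum_const_smul _ hSsum]
    have hJe : ∀ J : Fin d → ℤ, J + e - e = J := fun J => by abel
    have hJe' : ∀ J : Fin d → ℤ, J - e + e = J := fun J => by abel
    have r2 : ∑' J, q (J + e) • node Δx J = ∑' J, q J • node Δx (J - e) := by
      calc ∑' J, q (J + e) • node Δx J
          = ∑' J, (fun K => q K • node Δx (K - e)) (J + e) := by simp only [hJe]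
        _ = ∑' J, q J • node Δx (J - e) := tsum_shift (fun K => q K • node Δx (K - e)) e
    have r3 : ∑' J, p (J - e) • node Δx J = ∑' J, p J • node Δx (J + e) := by
      calc ∑' J, p (J - e) • node Δx J
          = ∑' J, (fun K => p K • node Δx (K + e)) (J - e) := by simp only [hJe']
        _ = ∑' J, p J • node Δx (J + e) := tsum_shift_sub (fun K => p K • node Δx (K + e)) e
    have hrw : ∑' J, (p J • node Δx J - q (J + e) • node Δx J
        - p (J - e) • node Δx J + q J • node Δx J)
        = ∑' J, (q J - p J) • E := by
      rw [Summable.tsum_add ((ST1.sub ST2).sub ST3) ST4, Summable.tsum_sub (ST1.sub ST2) ST3, Summable.tsum_sub ST1 ST2,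
        r2, r3, ← Summable.tsum_sub ST1 ST2', ← Summable.tsum_sub (ST1.sub ST2') ST3', ← Summable.tsum_add
        ((ST1.sub ST2').sub ST3') ST4]
      congr 1
      funext J
      rw [node_sub_single, node_add_single, ← hE, smul_sub, smul_add, sub_smul]
      abel
    rw [hrw]
    have SP : Summable p := summable_posmul hwinf habs hρ0 hρs i
    have SQ : Summable q := summable_negmul hwinf habs hρ0 hρs i
    rw [Summable.tsum_smul_const (SQ.sub SP)]
    have hqp : ∀ J, q J - p J = -(a J i * ρ J) := by
      intro J
      have h := pos_sub_neg (a J i)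
      rw [hp, hq]
      linear_combination (-(ρ J)) * h
    have : ∑' J, (q J - p J) = 0 := by
      calc ∑' J, (q J - p J) = ∑' J, -(a J i * ρ J) := by
            congr 1; funext J; exact hqp J
        _ = -∑' J, a J i * ρ J := by rw [tsum_neg]
        _ = 0 := by
            rw [ha, tsum_discVel_mul_eq_zero hwinf hodd hgb hρ0 hρs i, neg_zero]
    rw [this, zero_smul, smul_zero]
  have hmain : (fun J => upwindStep Δx Δt a ρ J • node Δx J)
      = fun J => ρ J • node Δx J - ∑ i, (Δt / Δx i *
        (pos (a J i) * ρ J - neg (a (J + Pi.single i 1) i) * ρ (J + Pi.single i 1)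
          - pos (a (J - Pi.single i 1) i) * ρ (J - Pi.single i 1) + neg (a J i) * ρ J))
          • node Δx J := by
    funext J
    rw [upwindStep, sub_smul, Finset.sum_smul]
  rw [hmain, Summable.tsum_sub S0 (summable_sum (fun i _ => (hper i).1)),
    Summable.tsum_finsetSum (fun i _ => (hper i).1),
    Finset.sum_congr rfl (fun i _ => (hper i).2), Finset.sum_const_zero, sub_zero]

end Scheme


section Cells

variable {d : ℕ} {Δx : Fin d → ℝ}

lemma cell_measurable (Δx : Fin d → ℝ) (J : Fin d → ℤ) : MeasurableSet (cell Δx J) := by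
  have heq : cell Δx J = ⋂ i, (fun y : Euc d => y i) ⁻¹'
      (Set.Ico (((J i : ℝ) - 1/2) * Δx i) (((J i : ℝ) + 1/2) * Δx i)) := by
    ext y
    simp only [cell, Set.mem_setOf_eq, Set.mem_iInter, Set.mem_preimage, Set.mem_Ico]
  rw [heq]
  apply MeasurableSet.iInter
  intro i
  have hm : Measurable (fun y : Euc d => y i) :=
    (EuclideanSpace.proj (𝕜 := ℝ) i).continuous.measurable
  exact hm measurableSet_Ico

lemma cell_disjoint (hΔx : ∀ i, 0 < Δx i) {J K : Fin d → ℤ} (hJK : J ≠ K) :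
    Disjoint (cell Δx J) (cell Δx K) := by
  rw [Set.disjoint_left]
  intro y hyJ hyK
  apply hJK
  funext i
  by_contra hne
  have hgoal : False := by
    rcases lt_or_gt_of_ne hne with h | h
    · have h1 := (hyJ i).2
      have h2 := (hyK i).1
      have hle : ((J i : ℝ) + 1/2) ≤ ((K i : ℝ) - 1/2) := by
        have : (J i : ℝ) + 1 ≤ K i := by exact_mod_cast Int.add_one_le_iff.mpr h
        linarith
      nlinarith [hΔx i]
    · have h1 := (hyK i).2
      have h2 := (hyJ i).1
      have hle : ((K i : ℝ) + 1/2) ≤ ((J i : ℝ) - 1/2) := by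
        have : (K i : ℝ) + 1 ≤ J i := by exact_mod_cast Int.add_one_le_iff.mpr h
        linarith
      nlinarith [hΔx i]
  exact hgoal

variable (ρini : MeasureTheory.Measure (Euc d)) [MeasureTheory.IsProbabilityMeasure ρini]

lemma initial_mass (hΔx : ∀ i, 0 < Δx i) :
    Summable (fun J : Fin d → ℤ => (ρini (cell Δx J)).toReal) ∧
      ∑' J : Fin d → ℤ, (ρini (cell Δx J)).toReal ≤ 1 := by
  have hb : ∀ u : Finset (Fin d → ℤ), ∑ J ∈ u, (ρini (cell Δx J)).toReal ≤ 1 := by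
    intro u
    have hmeas : ∀ J ∈ u, MeasurableSet (cell Δx J) := fun J _ => cell_measurable Δx J
    have hdisj : (↑u : Set (Fin d → ℤ)).PairwiseDisjoint (cell Δx) :=
      fun J _ K _ hne => cell_disjoint hΔx hne
    rw [← ENNReal.toReal_sum (fun J _ => measure_ne_top ρini _),
      ← measure_biUnion_finset hdisj hmeas]
    have hle : ρini (⋃ J ∈ u, cell Δx J) ≤ 1 := prob_le_one
    calc (ρini (⋃ J ∈ u, cell Δx J)).toReal ≤ (1 : ℝ≥0∞).toReal :=
          ENNReal.toReal_mono ENNReal.one_ne_top hle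
      _ = 1 := by simp
  have hs := summable_of_sum_le (fun J => ENNReal.toReal_nonneg) hb
  exact ⟨hs, Summable.tsum_le_of_sum_le hs hb⟩

lemma initial_moment (hΔx : ∀ i, 0 < Δx i)
    (hmom2 : MeasureTheory.Integrable (fun x : Euc d => ‖x‖ ^ 2) ρini) :
    Summable (fun J : Fin d → ℤ => (ρini (cell Δx J)).toReal * ‖node Δx J‖) := by
  set R : ℝ := ∑ i, Δx i with hR
  have hR0 : 0 ≤ R := Finset.sum_nonneg (fun i _ => le_of_lt (hΔx i))
  have h1 : MeasureTheory.Integrable (fun y : Euc d => ‖y‖) ρini := by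
    apply MeasureTheory.Integrable.mono
      ((MeasureTheory.integrable_const (1:ℝ)).add hmom2)
      continuous_norm.aestronglyMeasurable
    filter_upwards with y
    rw [Real.norm_eq_abs, abs_of_nonneg (norm_nonneg y), Real.norm_eq_abs]
    have h2 : ‖y‖ ≤ 1 + ‖y‖ ^ 2 := by nlinarith [norm_nonneg y]
    calc ‖y‖ ≤ 1 + ‖y‖ ^ 2 := h2
      _ ≤ |1 + ‖y‖ ^ 2| := le_abs_self _
  have hnormInt : MeasureTheory.Integrable (fun y : Euc d => ‖y‖ + R) ρini :=
    h1.add (MeasureTheory.integrable_const R)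
  have hkey : ∀ J, (ρini (cell Δx J)).toReal * ‖node Δx J‖
      ≤ ∫ y in cell Δx J, (‖y‖ + R) ∂ρini := by
    intro J
    have hconst : ∫ _ in cell Δx J, ‖node Δx J‖ ∂ρini
        = (ρini (cell Δx J)).toReal * ‖node Δx J‖ := by
      rw [MeasureTheory.setIntegral_const, smul_eq_mul, measureReal_def]
    rw [← hconst]
    apply MeasureTheory.setIntegral_mono_on
      (MeasureTheory.integrableOn_const (measure_ne_top _ _))
      hnormInt.integrableOn (cell_measurable Δx J)
    intro y hy
    have hdiff : ‖node Δx J - y‖ ≤ R := by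
      apply Euc.norm_le_sum _ Δx (fun i => le_of_lt (hΔx i))
      intro i
      have h := hy i
      have happ : (node Δx J - y) i = (J i : ℝ) * Δx i - y i := by
        rw [PiLp.sub_apply, node_apply]
      rw [happ, abs_le]
      constructor <;> nlinarith [hΔx i, h.1, h.2]
    calc ‖node Δx J‖ = ‖y + (node Δx J - y)‖ := by rw [add_sub_cancel]
      _ ≤ ‖y‖ + ‖node Δx J - y‖ := norm_add_le _ _
      _ ≤ ‖y‖ + R := by linarith
  have hb : ∀ u : Finset (Fin d → ℤ),
      ∑ J ∈ u, (ρini (cell Δx J)).toReal * ‖node Δx J‖ ≤ ∫ y, (‖y‖ + R) ∂ρini := by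
    intro u
    have hdisj : (↑u : Set (Fin d → ℤ)).Pairwise (Function.onFun Disjoint (cell Δx)) :=
      fun J _ K _ hne => cell_disjoint hΔx hne
    calc ∑ J ∈ u, (ρini (cell Δx J)).toReal * ‖node Δx J‖
        ≤ ∑ J ∈ u, ∫ y in cell Δx J, (‖y‖ + R) ∂ρini :=
          Finset.sum_le_sum (fun J _ => hkey J)
      _ = ∫ y in ⋃ J ∈ u, cell Δx J, (‖y‖ + R) ∂ρini :=
          (MeasureTheory.integral_biUnion_finset u (fun J _ => cell_measurable Δx J)
            hdisj (fun J _ => hnormInt.integrableOn)).symm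
      _ ≤ ∫ y, (‖y‖ + R) ∂ρini := by
          apply MeasureTheory.setIntegral_le_integral hnormInt
          filter_upwards with y
          have := norm_nonneg y
          positivity
  exact summable_of_sum_le
    (fun J => mul_nonneg ENNReal.toReal_nonneg (norm_nonneg _)) hb

end Cells

/-- Conservation of the center of mass by the upwind scheme. -/
theorem stmt6 {d : ℕ} (hd : 1 ≤ d) (W : Euc d → ℝ) (lam winf : ℝ) (hwinf : 0 ≤ winf)
    (hsymm : ∀ x : Euc d, W (-x) = W x) (hW0 : W 0 = 0)
    (hconv : ConvexOn ℝ Set.univ (fun x : Euc d => W x - lam / 2 * ‖x‖ ^ 2))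
    (hC1 : ContDiffOn ℝ 1 W {(0 : Euc d)}ᶜ)
    (hbound : ∀ x : Euc d, x ≠ 0 → ‖gradient W x‖ ≤ winf)
    (Δx : Fin d → ℝ) (hΔx : ∀ i, 0 < Δx i) (Δt : ℝ) (hΔt : 0 < Δt)
    (hCFL : winf * ∑ i, Δt / Δx i < 1 / 2)
    (ρini : Measure (Euc d)) [IsProbabilityMeasure ρini]
    (hmom2 : Integrable (fun x : Euc d => ‖x‖ ^ 2) ρini)
    (ρ : ℕ → (Fin d → ℤ) → ℝ)
    (h0 : ∀ J, ρ 0 J = (ρini (cell Δx J)).toReal)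
    (hrec : ∀ n, ρ (n + 1) = upwindStep Δx Δt (discVel W Δx (ρ n)) (ρ n)) :
    ∀ n : ℕ, Summable (fun J : Fin d → ℤ => ρ n J • node Δx J) ∧
      ∑' J : Fin d → ℤ, ρ n J • node Δx J = ∑' J : Fin d → ℤ, ρ 0 J • node Δx J := by
  have hgb : ∀ x : Euc d, ‖hatGrad W x‖ ≤ winf := hatGrad_norm_le hwinf hbound
  have hodd : ∀ x : Euc d, hatGrad W (-x) = -hatGrad W x := hatGrad_neg hsymm
  have hCFL' : winf * ∑ i, Δt / Δx i < 1/2 := hCFL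
  have hInv : ∀ n, (∀ J, 0 ≤ ρ n J) ∧ Summable (ρ n) ∧ (∑' J, ρ n J ≤ 1) ∧
      Summable (fun J => ρ n J * ‖node Δx J‖) ∧
      (∑' J, ρ n J • node Δx J = ∑' J, ρ 0 J • node Δx J) := by
    intro n
    induction n with
    | zero =>
      have hρ0eq : ρ 0 = fun J => (ρini (cell Δx J)).toReal := funext h0
      obtain ⟨hs, hle⟩ := initial_mass (Δx := Δx) ρini hΔx
      refine ⟨?_, ?_, ?_, ?_, rfl⟩
      · intro J; rw [h0 J]; exact ENNReal.toReal_nonneg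
      · rw [hρ0eq]; exact hs
      · rw [hρ0eq]; exact hle
      · rw [hρ0eq]; exact initial_moment ρini hΔx hmom2
    | succ n ih =>
      obtain ⟨hnn, hsum, hle, hmom, hcom⟩ := ih
      have habs : ∀ J i, |discVel W Δx (ρ n) J i| ≤ winf := fun J i =>
        discVel_abs_le hwinf hgb hnn hsum hle J i
      rw [hrec n]
      refine ⟨upwind_nonneg hwinf hΔx hΔt hCFL' habs hnn,
        upwind_summable hwinf habs hnn hsum, ?_,
        upwind_moment_summable hwinf hΔx hΔt hCFL' habs hnn hsum hmom, ?_⟩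
      · rw [upwind_mass hwinf habs hnn hsum]; exact hle
      · rw [upwind_com hwinf hΔx hΔt hCFL' hodd hgb hnn hsum hle hmom]; exact hcom
  intro n
  obtain ⟨hnn, hsum, hle, hmom, hcom⟩ := hInv n
  refine ⟨?_, hcom⟩
  apply Summable.of_norm_bounded hmom
  intro J
  rw [norm_smul, Real.norm_eq_abs, abs_of_nonneg (hnn J)]
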